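/- arXiv:1905.10118 — 3 statements merged into one kernel-verified Lean document; each statement's English description precedes it below -/
import Mathlib

section
/- The correspondence C : Ψ ⇉ R² defined by C(ψ) = {(Γ̃0,Γ̃1) : Γ̃0 ≥ (Σ0 + d0(ψ))Γ̃1, Γ̃0 ≤ [δ/α - (ν0-μ0)² - (ν1-μ1)² + Σ0 + Σ1 + d0(ψ) + d1(ψ)]Γ̃1 - 1, Γ̃1 ≤ 1/(Σ1 + d1(ψ))}, with ψ = (ν0, ν1, α), d0(ψ) = [(1-α)Σ0 + α(1-α)(μ0-ν0)²]/α and d1(ψ) = [(1-α)Σ1 + α(1-α)(μ1-ν1)²]/α, is upper-semicontinuous on Ψ = {(ν0,ν1,α) : α[(ν0-μ0)² + (ν1-μ1)²] ≤ δ, 0 < α < 1}. -/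
open Set

/-- `d0(ψ) = [(1-α)Σ0 + α(1-α)(μ0-ν0)²]/α`. -/
noncomputable def d0 (S0 μ0 ν0 α : ℝ) : ℝ :=
  ((1 - α) * S0 + α * (1 - α) * (μ0 - ν0) ^ 2) / α

/-- `d1(ψ) = [(1-α)Σ1 + α(1-α)(μ1-ν1)²]/α`. -/
noncomputable def d1 (S1 μ1 ν1 α : ℝ) : ℝ :=
  ((1 - α) * S1 + α * (1 - α) * (μ1 - ν1) ^ 2) / α

/-- The parameter set `Ψ = {(ν0,ν1,α) : α[(ν0-μ0)² + (ν1-μ1)²] ≤ δ, 0 < α < 1}`,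
with `ψ = (ν0, ν1, α)`. -/
def PsiSet (μ0 μ1 δ : ℝ) : Set (ℝ × ℝ × ℝ) :=
  {ψ | ψ.2.2 * ((ψ.1 - μ0) ^ 2 + (ψ.2.1 - μ1) ^ 2) ≤ δ ∧ 0 < ψ.2.2 ∧ ψ.2.2 < 1}

/-- The correspondence `C : Ψ ⇉ ℝ²` of the paper, with `ψ = (ν0, ν1, α)` and
`s = (Γ̃0, Γ̃1)`. -/
noncomputable def corr (S0 S1 δ μ0 μ1 : ℝ) (ψ : ℝ × ℝ × ℝ) : Set (ℝ × ℝ) :=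
  {s : ℝ × ℝ |
    (S0 + d0 S0 μ0 ψ.1 ψ.2.2) * s.2 ≤ s.1 ∧
    s.1 ≤ (δ / ψ.2.2 - (ψ.1 - μ0) ^ 2 - (ψ.2.1 - μ1) ^ 2 + S0 + S1
            + d0 S0 μ0 ψ.1 ψ.2.2 + d1 S1 μ1 ψ.2.1 ψ.2.2) * s.2 - 1 ∧
    s.2 ≤ 1 / (S1 + d1 S1 μ1 ψ.2.1 ψ.2.2)}

/-- Upper-semicontinuity of a correspondence (open-set definition). -/
def IsUSCCorrOn {X Y : Type*} [TopologicalSpace X] [TopologicalSpace Y]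
    (Ψ : Set X) (C : X → Set Y) : Prop :=
  ∀ ψ ∈ Ψ, ∀ V : Set Y, IsOpen V → C ψ ⊆ V →
    ∃ U : Set X, IsOpen U ∧ ψ ∈ U ∧ ∀ ψ' ∈ U ∩ Ψ, C ψ' ⊆ V

/-! ### Auxiliary functions describing the three constraints defining `corr`. -/

/-- `f1 ≥ 0` iff the first constraint of `corr` holds. -/
noncomputable def f1 (S0 μ0 : ℝ) (p : (ℝ × ℝ × ℝ) × ℝ × ℝ) : ℝ :=
  p.2.1 - (S0 + d0 S0 μ0 p.1.1 p.1.2.2) * p.2.2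

/-- `f2 ≥ 0` iff the second constraint of `corr` holds. -/
noncomputable def f2 (S0 S1 δ μ0 μ1 : ℝ) (p : (ℝ × ℝ × ℝ) × ℝ × ℝ) : ℝ :=
  (δ / p.1.2.2 - (p.1.1 - μ0) ^ 2 - (p.1.2.1 - μ1) ^ 2 + S0 + S1
      + d0 S0 μ0 p.1.1 p.1.2.2 + d1 S1 μ1 p.1.2.1 p.1.2.2) * p.2.2 - 1 - p.2.1

/-- `f3 ≥ 0` iff the third constraint of `corr` holds. -/
noncomputable def f3 (S1 μ1 : ℝ) (p : (ℝ × ℝ × ℝ) × ℝ × ℝ) : ℝ :=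
  1 / (S1 + d1 S1 μ1 p.1.2.1 p.1.2.2) - p.2.2

lemma contAt_d0 (S0 μ0 : ℝ) {p : (ℝ × ℝ × ℝ) × ℝ × ℝ} (h : p.1.2.2 ≠ 0) :
    ContinuousAt (fun q : (ℝ × ℝ × ℝ) × ℝ × ℝ => d0 S0 μ0 q.1.1 q.1.2.2) p := by
  unfold d0
  exact ContinuousAt.div (by fun_prop) (by fun_prop) h

lemma contAt_d1 (S1 μ1 : ℝ) {p : (ℝ × ℝ × ℝ) × ℝ × ℝ} (h : p.1.2.2 ≠ 0) :
    ContinuousAt (fun q : (ℝ × ℝ × ℝ) × ℝ × ℝ => d1 S1 μ1 q.1.2.1 q.1.2.2) p := by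
  unfold d1
  exact ContinuousAt.div (by fun_prop) (by fun_prop) h

lemma contAt_f1 (S0 μ0 : ℝ) {p : (ℝ × ℝ × ℝ) × ℝ × ℝ} (h : p.1.2.2 ≠ 0) :
    ContinuousAt (f1 S0 μ0) p := by
  unfold f1
  exact ContinuousAt.sub (by fun_prop)
    (ContinuousAt.mul (continuousAt_const.add (contAt_d0 S0 μ0 h)) (by fun_prop))

lemma contAt_f2 (S0 S1 δ μ0 μ1 : ℝ) {p : (ℝ × ℝ × ℝ) × ℝ × ℝ} (h : p.1.2.2 ≠ 0) :
    ContinuousAt (f2 S0 S1 δ μ0 μ1) p := by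
  unfold f2
  have hdiv : ContinuousAt (fun q : (ℝ × ℝ × ℝ) × ℝ × ℝ => δ / q.1.2.2) p :=
    ContinuousAt.div continuousAt_const (by fun_prop) h
  exact ContinuousAt.sub
    (ContinuousAt.sub
      (ContinuousAt.mul
        ((((((hdiv.sub (by fun_prop)).sub (by fun_prop)).add continuousAt_const).add
            continuousAt_const).add (contAt_d0 S0 μ0 h)).add (contAt_d1 S1 μ1 h))
        (by fun_prop))
      continuousAt_const)
    (by fun_prop)

lemma contAt_f3 (S1 μ1 : ℝ) {p : (ℝ × ℝ × ℝ) × ℝ × ℝ} (h : p.1.2.2 ≠ 0)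
    (h' : S1 + d1 S1 μ1 p.1.2.1 p.1.2.2 ≠ 0) :
    ContinuousAt (f3 S1 μ1) p := by
  unfold f3
  exact ContinuousAt.sub
    (ContinuousAt.div continuousAt_const (continuousAt_const.add (contAt_d1 S1 μ1 h)) h')
    (by fun_prop)

lemma d0_nonneg {S0 μ0 ν0 α : ℝ} (hS0 : 0 ≤ S0) (h0 : 0 < α) (h1 : α < 1) :
    0 ≤ d0 S0 μ0 ν0 α := by
  unfold d0
  apply div_nonneg _ h0.le
  have h2 : 0 ≤ (1 - α) * S0 := mul_nonneg (by linarith) hS0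
  have h3 : 0 ≤ α * (1 - α) * (μ0 - ν0) ^ 2 :=
    mul_nonneg (mul_nonneg h0.le (by linarith)) (sq_nonneg _)
  linarith

lemma d1_nonneg {S1 μ1 ν1 α : ℝ} (hS1 : 0 ≤ S1) (h0 : 0 < α) (h1 : α < 1) :
    0 ≤ d1 S1 μ1 ν1 α := by
  unfold d1
  apply div_nonneg _ h0.le
  have h2 : 0 ≤ (1 - α) * S1 := mul_nonneg (by linarith) hS1
  have h3 : 0 ≤ α * (1 - α) * (μ1 - ν1) ^ 2 :=
    mul_nonneg (mul_nonneg h0.le (by linarith)) (sq_nonneg _)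
  linarith

lemma d0_le {S0 μ0 ν0 α : ℝ} (hS0 : 0 ≤ S0) (h0 : 0 < α) (h1 : α < 1) :
    d0 S0 μ0 ν0 α ≤ S0 / α + (ν0 - μ0) ^ 2 := by
  have key : (1 - α) * S0 + α * (1 - α) * (μ0 - ν0) ^ 2 ≤ S0 + α * (ν0 - μ0) ^ 2 := by
    nlinarith [mul_nonneg h0.le hS0, mul_nonneg (mul_nonneg h0.le h0.le) (sq_nonneg (μ0 - ν0)),
      sq_nonneg (μ0 - ν0)]
  calc d0 S0 μ0 ν0 α = ((1 - α) * S0 + α * (1 - α) * (μ0 - ν0) ^ 2) / α := rfl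
    _ ≤ (S0 + α * (ν0 - μ0) ^ 2) / α := by gcongr
    _ = S0 / α + (ν0 - μ0) ^ 2 := by
        rw [add_div, mul_div_cancel_left₀ _ h0.ne']

lemma d1_le {S1 μ1 ν1 α : ℝ} (hS1 : 0 ≤ S1) (h0 : 0 < α) (h1 : α < 1) :
    d1 S1 μ1 ν1 α ≤ S1 / α + (ν1 - μ1) ^ 2 := by
  have key : (1 - α) * S1 + α * (1 - α) * (μ1 - ν1) ^ 2 ≤ S1 + α * (ν1 - μ1) ^ 2 := by
    nlinarith [mul_nonneg h0.le hS1, mul_nonneg (mul_nonneg h0.le h0.le) (sq_nonneg (μ1 - ν1)),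
      sq_nonneg (μ1 - ν1)]
  calc d1 S1 μ1 ν1 α = ((1 - α) * S1 + α * (1 - α) * (μ1 - ν1) ^ 2) / α := rfl
    _ ≤ (S1 + α * (ν1 - μ1) ^ 2) / α := by gcongr
    _ = S1 / α + (ν1 - μ1) ^ 2 := by
        rw [add_div, mul_div_cancel_left₀ _ h0.ne']

/-- The correspondence `C` of the paper is upper-semicontinuous on `Ψ`. -/
theorem stmt_8 (S0 S1 δ μ0 μ1 : ℝ) (hS0 : 0 < S0) (hS1 : 0 < S1) (hδ : 0 < δ) :
    IsUSCCorrOn (PsiSet μ0 μ1 δ) (corr S0 S1 δ μ0 μ1) := by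
  intro ψ hψ V hV hCV
  obtain ⟨ν0, ν1, α⟩ := ψ
  simp only [PsiSet, mem_setOf_eq] at hψ
  obtain ⟨hψδ, hα0, hα1⟩ := hψ
  have hα2 : 0 < α / 2 := by linarith
  obtain ⟨c0, hc0def⟩ : ∃ c0 : ℝ, c0 = (ν0 - μ0) ^ 2 + 1 := ⟨_, rfl⟩
  obtain ⟨c1, hc1def⟩ : ∃ c1 : ℝ, c1 = (ν1 - μ1) ^ 2 + 1 := ⟨_, rfl⟩
  have hc0pos : 0 < c0 := by rw [hc0def]; positivity
  have hc1pos : 0 < c1 := by rw [hc1def]; positivity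
  obtain ⟨Bmax, hBdef⟩ : ∃ B : ℝ,
      B = δ / (α / 2) + S0 + S1 + (S0 / (α / 2) + c0) + (S1 / (α / 2) + c1) := ⟨_, rfl⟩
  have hBpos : 0 < Bmax := by rw [hBdef]; positivity
  obtain ⟨K, hKdef⟩ : ∃ K : Set (ℝ × ℝ), K = Icc 0 (Bmax / S1) ×ˢ Icc 0 (1 / S1) := ⟨_, rfl⟩
  have hK : IsCompact K := by rw [hKdef]; exact isCompact_Icc.prod isCompact_Icc
  obtain ⟨L, hLdef⟩ : ∃ L : Set (ℝ × ℝ), L = K ∩ Vᶜ := ⟨_, rfl⟩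
  have hL : IsCompact L := by rw [hLdef]; exact hK.inter_right hV.isClosed_compl
  obtain ⟨W, hWdef⟩ : ∃ W : Set (ℝ × ℝ × ℝ),
      W = {q | α / 2 < q.2.2 ∧ (q.1 - μ0) ^ 2 < c0 ∧ (q.2.1 - μ1) ^ 2 < c1 ∧
        0 < S1 + d1 S1 μ1 q.2.1 q.2.2} := ⟨_, rfl⟩
  have hWopen : IsOpen W := by
    rw [hWdef, isOpen_iff_mem_nhds]
    rintro q ⟨hq1, hq2, hq3, hq4⟩
    have hqα : q.2.2 ≠ 0 := (lt_trans hα2 hq1).ne'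
    have hd1c : ContinuousAt (fun q : ℝ × ℝ × ℝ => S1 + d1 S1 μ1 q.2.1 q.2.2) q := by
      apply continuousAt_const.add
      unfold d1
      exact ContinuousAt.div (by fun_prop) (by fun_prop) hqα
    have A1 : {q' : ℝ × ℝ × ℝ | α / 2 < q'.2.2} ∈ nhds q :=
      (isOpen_lt continuous_const (by fun_prop)).mem_nhds hq1
    have A2 : {q' : ℝ × ℝ × ℝ | (q'.1 - μ0) ^ 2 < c0} ∈ nhds q :=
      (isOpen_lt (by fun_prop) continuous_const).mem_nhds hq2
    have A3 : {q' : ℝ × ℝ × ℝ | (q'.2.1 - μ1) ^ 2 < c1} ∈ nhds q :=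
      (isOpen_lt (by fun_prop) continuous_const).mem_nhds hq3
    have A4 : (fun q : ℝ × ℝ × ℝ => S1 + d1 S1 μ1 q.2.1 q.2.2) ⁻¹' Ioi 0 ∈ nhds q :=
      hd1c.preimage_mem_nhds (Ioi_mem_nhds hq4)
    filter_upwards [A1, A2, A3, A4] with q' h1 h2 h3 h4
    exact ⟨h1, h2, h3, h4⟩
  have hd1nnψ : 0 ≤ d1 S1 μ1 ν1 α := d1_nonneg hS1.le hα0 hα1
  have hψW : (⟨ν0, ν1, α⟩ : ℝ × ℝ × ℝ) ∈ W := by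
    rw [hWdef]
    refine ⟨by simp only; linarith, ?_, ?_, by simp only; linarith⟩
    · show (ν0 - μ0) ^ 2 < c0
      rw [hc0def]; linarith
    · show (ν1 - μ1) ^ 2 < c1
      rw [hc1def]; linarith
  obtain ⟨n, hndef⟩ : ∃ n : Set ((ℝ × ℝ × ℝ) × ℝ × ℝ),
      n = {p | p.1 ∈ W ∧ (f1 S0 μ0 p < 0 ∨ f2 S0 S1 δ μ0 μ1 p < 0 ∨ f3 S1 μ1 p < 0)} :=
    ⟨_, rfl⟩
  have hnopen : IsOpen n := by
    rw [hndef, isOpen_iff_mem_nhds]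
    rintro p ⟨hpW, hpf⟩
    have hpW2 := hpW
    rw [hWdef] at hpW2
    have hpα : p.1.2.2 ≠ 0 := (lt_trans hα2 hpW2.1).ne'
    have hpd : S1 + d1 S1 μ1 p.1.2.1 p.1.2.2 ≠ 0 := hpW2.2.2.2.ne'
    have HW : Prod.fst ⁻¹' W ∈ nhds p :=
      continuousAt_fst.preimage_mem_nhds (hWopen.mem_nhds hpW)
    rcases hpf with h | h | h
    · have Hf : f1 S0 μ0 ⁻¹' Iio 0 ∈ nhds p :=
        (contAt_f1 S0 μ0 hpα).preimage_mem_nhds (Iio_mem_nhds h)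
      filter_upwards [HW, Hf] with p' h1 h2
      exact ⟨h1, Or.inl h2⟩
    · have Hf : f2 S0 S1 δ μ0 μ1 ⁻¹' Iio 0 ∈ nhds p :=
        (contAt_f2 S0 S1 δ μ0 μ1 hpα).preimage_mem_nhds (Iio_mem_nhds h)
      filter_upwards [HW, Hf] with p' h1 h2
      exact ⟨h1, Or.inr (Or.inl h2)⟩
    · have Hf : f3 S1 μ1 ⁻¹' Iio 0 ∈ nhds p :=
        (contAt_f3 S1 μ1 hpα hpd).preimage_mem_nhds (Iio_mem_nhds h)
      filter_upwards [HW, Hf] with p' h1 h2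
      exact ⟨h1, Or.inr (Or.inr h2)⟩
  have hsub : ({(⟨ν0, ν1, α⟩ : ℝ × ℝ × ℝ)} : Set (ℝ × ℝ × ℝ)) ×ˢ L ⊆ n := by
    rintro ⟨q, s⟩ ⟨hq, hsL⟩
    simp only [mem_singleton_iff] at hq
    subst hq
    rw [hLdef] at hsL
    rw [hndef]
    refine ⟨hψW, ?_⟩
    by_contra hcon
    push_neg at hcon
    obtain ⟨g1, g2, g3⟩ := hcon
    apply hsL.2
    apply hCV
    simp only [f1, f2, f3] at g1 g2 g3
    simp only [corr, mem_setOf_eq]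
    exact ⟨by linarith, by linarith, by linarith⟩
  obtain ⟨u, v, hu, hv, hψu, hLv, huv⟩ :=
    generalized_tube_lemma isCompact_singleton hL hnopen hsub
  refine ⟨u ∩ W, hu.inter hWopen, ⟨hψu rfl, hψW⟩, ?_⟩
  rintro ⟨ν0', ν1', α'⟩ ⟨⟨hu', hW'⟩, hΨ'⟩ s hs
  simp only [PsiSet, mem_setOf_eq] at hΨ'
  obtain ⟨hδ', h0', h1'⟩ := hΨ'
  rw [hWdef] at hW'
  obtain ⟨hαlt, hq0, hq1, hd1p⟩ := hW'
  simp only [corr, mem_setOf_eq] at hs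
  obtain ⟨k1, k2, k3⟩ := hs
  simp only at hδ' h0' h1' hαlt hq0 hq1 hd1p k1 k2 k3
  by_contra hsV
  have hα' : 0 < α' := lt_trans hα2 hαlt
  have hd0nn : 0 ≤ d0 S0 μ0 ν0' α' := d0_nonneg hS0.le h0' h1'
  have hd1nn : 0 ≤ d1 S1 μ1 ν1' α' := d1_nonneg hS1.le h0' h1'
  have hδα : (ν0' - μ0) ^ 2 + (ν1' - μ1) ^ 2 ≤ δ / α' := by
    rw [le_div_iff₀ hα']
    linarith [mul_comm α' ((ν0' - μ0) ^ 2 + (ν1' - μ1) ^ 2)]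
  have hy1 : 1 ≤ (δ / α' - (ν0' - μ0) ^ 2 - (ν1' - μ1) ^ 2 + S1 + d1 S1 μ1 ν1' α') * s.2 := by
    nlinarith [k1, k2, hd0nn]
  have hCpos : 0 < δ / α' - (ν0' - μ0) ^ 2 - (ν1' - μ1) ^ 2 + S1 + d1 S1 μ1 ν1' α' := by
    linarith
  have hy0 : 0 < s.2 := by
    by_contra hy
    push_neg at hy
    linarith [mul_nonpos_of_nonneg_of_nonpos hCpos.le hy]
  have hyle : s.2 ≤ 1 / S1 :=
    le_trans k3 (one_div_le_one_div_of_le hS1 (by linarith))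
  have hd0le : d0 S0 μ0 ν0' α' ≤ S0 / (α / 2) + c0 := by
    have h1 := d0_le (μ0 := μ0) (ν0 := ν0') hS0.le h0' h1'
    have h2 : S0 / α' ≤ S0 / (α / 2) := by gcongr <;> linarith
    linarith
  have hd1le : d1 S1 μ1 ν1' α' ≤ S1 / (α / 2) + c1 := by
    have h1 := d1_le (μ1 := μ1) (ν1 := ν1') hS1.le h0' h1'
    have h2 : S1 / α' ≤ S1 / (α / 2) := by gcongr <;> linarith
    linarith
  have hδle : δ / α' ≤ δ / (α / 2) := by gcongr <;> linarith
  have hx0 : 0 ≤ s.1 :=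
    le_trans (mul_nonneg (by linarith) hy0.le) k1
  have hBle : δ / α' - (ν0' - μ0) ^ 2 - (ν1' - μ1) ^ 2 + S0 + S1
      + d0 S0 μ0 ν0' α' + d1 S1 μ1 ν1' α' ≤ Bmax := by
    rw [hBdef]
    linarith [hδle, hd0le, hd1le, sq_nonneg (ν0' - μ0), sq_nonneg (ν1' - μ1)]
  have hx1 : s.1 ≤ Bmax / S1 := by
    calc s.1 ≤ (δ / α' - (ν0' - μ0) ^ 2 - (ν1' - μ1) ^ 2 + S0 + S1
        + d0 S0 μ0 ν0' α' + d1 S1 μ1 ν1' α') * s.2 - 1 := k2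
      _ ≤ Bmax * s.2 := by linarith [mul_le_mul_of_nonneg_right hBle hy0.le]
      _ ≤ Bmax * (1 / S1) := mul_le_mul_of_nonneg_left hyle hBpos.le
      _ = Bmax / S1 := by ring
  have hsK : s ∈ K := by
    rw [hKdef]
    exact ⟨⟨hx0, hx1⟩, ⟨hy0.le, hyle⟩⟩
  have hsL : s ∈ L := by
    rw [hLdef]
    exact ⟨hsK, hsV⟩
  have hsn : ((⟨ν0', ν1', α'⟩ : ℝ × ℝ × ℝ), s) ∈ n := huv ⟨hu', hLv hsL⟩
  rw [hndef] at hsn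
  rcases hsn.2 with hf | hf | hf <;>
    simp only [f1, f2, f3] at hf <;> linarith
end

section
/- The correspondence C defined in the paper (same C, d0, d1, Ψ as above) is lower-semicontinuous on Ψ: for every ψ ∈ Ψ and every open V with V ∩ C(ψ) ≠ ∅, there is a neighborhood U of ψ such that V ∩ C(ψ') ≠ ∅ for all ψ' ∈ U ∩ Ψ. -/
open Set

/-- `B(ψ) - A(ψ) = δ/α - r² + Σ1 + d1(ψ)`. -/
noncomputable def selBm (S1 δ μ0 μ1 : ℝ) (p : ℝ × ℝ × ℝ) : ℝ :=
  δ / p.2.2 - (p.1 - μ0) ^ 2 - (p.2.1 - μ1) ^ 2 + S1 + d1 S1 μ1 p.2.1 p.2.2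

/-- `A(ψ) = Σ0 + d0(ψ)`. -/
noncomputable def selA (S0 μ0 : ℝ) (p : ℝ × ℝ × ℝ) : ℝ := S0 + d0 S0 μ0 p.1 p.2.2

/-- clamped second coordinate of the selection. -/
noncomputable def selT (S1 δ μ0 μ1 g1 : ℝ) (p : ℝ × ℝ × ℝ) : ℝ :=
  max (1 / selBm S1 δ μ0 μ1 p) (min g1 (1 / (S1 + d1 S1 μ1 p.2.1 p.2.2)))

/-- continuous selection of `corr`. -/
noncomputable def selG (S0 S1 δ μ0 μ1 g0 g1 : ℝ) (p : ℝ × ℝ × ℝ) : ℝ × ℝ :=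
  (max (selA S0 μ0 p * selT S1 δ μ0 μ1 g1 p)
     (min g0 (selA S0 μ0 p * selT S1 δ μ0 μ1 g1 p
        + selBm S1 δ μ0 μ1 p * selT S1 δ μ0 μ1 g1 p - 1)),
   selT S1 δ μ0 μ1 g1 p)

lemma sel_facts (S1 δ μ0 μ1 : ℝ) (hS1 : 0 < S1) (p : ℝ × ℝ × ℝ)
    (hp : p ∈ PsiSet μ0 μ1 δ) :
    0 < S1 + d1 S1 μ1 p.2.1 p.2.2 ∧ S1 + d1 S1 μ1 p.2.1 p.2.2 ≤ selBm S1 δ μ0 μ1 p := by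
  obtain ⟨hδp, hz0, hz1⟩ := hp
  have hd1 : 0 ≤ d1 S1 μ1 p.2.1 p.2.2 := by
    apply div_nonneg _ hz0.le
    have h1 : (0:ℝ) ≤ (1 - p.2.2) * S1 := mul_nonneg (by linarith) hS1.le
    have h2 : (0:ℝ) ≤ p.2.2 * (1 - p.2.2) * (μ1 - p.2.1) ^ 2 :=
      mul_nonneg (mul_nonneg hz0.le (by linarith)) (sq_nonneg _)
    linarith
  have hr : (p.1 - μ0) ^ 2 + (p.2.1 - μ1) ^ 2 ≤ δ / p.2.2 :=
    (le_div_iff₀ hz0).mpr (by linarith [hδp])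
  constructor
  · linarith
  · unfold selBm; linarith

lemma sel_mem (S0 S1 δ μ0 μ1 : ℝ) (hS1 : 0 < S1)
    (g0 g1 : ℝ) (p : ℝ × ℝ × ℝ) (hp : p ∈ PsiSet μ0 μ1 δ) :
    selG S0 S1 δ μ0 μ1 g0 g1 p ∈ corr S0 S1 δ μ0 μ1 p := by
  obtain ⟨hden, hBm⟩ := sel_facts S1 δ μ0 μ1 hS1 p hp
  have hBm0 : 0 < selBm S1 δ μ0 μ1 p := lt_of_lt_of_le hden hBm
  set t := selT S1 δ μ0 μ1 g1 p with ht
  have ht1 : 1 / selBm S1 δ μ0 μ1 p ≤ t := le_max_left _ _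
  have ht2 : t ≤ 1 / (S1 + d1 S1 μ1 p.2.1 p.2.2) :=
    max_le (one_div_le_one_div_of_le hden hBm) (min_le_right _ _)
  have htB : 1 ≤ selBm S1 δ μ0 μ1 p * t := by
    have := mul_le_mul_of_nonneg_left ht1 hBm0.le
    rwa [mul_one_div, div_self hBm0.ne'] at this
  have hA : selA S0 μ0 p * t ≤ selA S0 μ0 p * t + selBm S1 δ μ0 μ1 p * t - 1 := by
    linarith
  refine ⟨?_, ?_, ?_⟩
  · show (S0 + d0 S0 μ0 p.1 p.2.2) * (selG S0 S1 δ μ0 μ1 g0 g1 p).2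
      ≤ (selG S0 S1 δ μ0 μ1 g0 g1 p).1
    exact le_max_left _ _
  · have hfst : (selG S0 S1 δ μ0 μ1 g0 g1 p).1
        = max (selA S0 μ0 p * t)
            (min g0 (selA S0 μ0 p * t + selBm S1 δ μ0 μ1 p * t - 1)) := rfl
    have hsnd : (selG S0 S1 δ μ0 μ1 g0 g1 p).2 = t := rfl
    have key : max (selA S0 μ0 p * t)
        (min g0 (selA S0 μ0 p * t + selBm S1 δ μ0 μ1 p * t - 1))
        ≤ selA S0 μ0 p * t + selBm S1 δ μ0 μ1 p * t - 1 :=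
      max_le hA (min_le_right _ _)
    have hco : (δ / p.2.2 - (p.1 - μ0) ^ 2 - (p.2.1 - μ1) ^ 2 + S0 + S1
        + d0 S0 μ0 p.1 p.2.2 + d1 S1 μ1 p.2.1 p.2.2) * t - 1
        = selA S0 μ0 p * t + selBm S1 δ μ0 μ1 p * t - 1 := by
      unfold selA selBm; ring
    show (selG S0 S1 δ μ0 μ1 g0 g1 p).1 ≤ _
    rw [hfst, hsnd, hco]
    exact key
  · exact ht2

lemma sel_fix (S0 S1 δ μ0 μ1 : ℝ) (hS1 : 0 < S1) (s : ℝ × ℝ) (ψ : ℝ × ℝ × ℝ)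
    (hψ : ψ ∈ PsiSet μ0 μ1 δ) (hs : s ∈ corr S0 S1 δ μ0 μ1 ψ) :
    selG S0 S1 δ μ0 μ1 s.1 s.2 ψ = s := by
  obtain ⟨h1, h2, h3⟩ := hs
  obtain ⟨hden, hBm⟩ := sel_facts S1 δ μ0 μ1 hS1 ψ hψ
  have hBm0 : 0 < selBm S1 δ μ0 μ1 ψ := lt_of_lt_of_le hden hBm
  have h2' : s.1 ≤ selA S0 μ0 ψ * s.2 + selBm S1 δ μ0 μ1 ψ * s.2 - 1 := by
    have hco : (δ / ψ.2.2 - (ψ.1 - μ0) ^ 2 - (ψ.2.1 - μ1) ^ 2 + S0 + S1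
        + d0 S0 μ0 ψ.1 ψ.2.2 + d1 S1 μ1 ψ.2.1 ψ.2.2) * s.2 - 1
        = selA S0 μ0 ψ * s.2 + selBm S1 δ μ0 μ1 ψ * s.2 - 1 := by
      unfold selA selBm; ring
    linarith [h2, hco.ge, hco.le]
  have h1' : selA S0 μ0 ψ * s.2 ≤ s.1 := h1
  have hg1 : 1 / selBm S1 δ μ0 μ1 ψ ≤ s.2 :=
    (div_le_iff₀ hBm0).mpr (by nlinarith)
  have hT : selT S1 δ μ0 μ1 s.2 ψ = s.2 := by
    unfold selT
    rw [min_eq_left h3, max_eq_right hg1]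
  unfold selG
  rw [hT, min_eq_left h2', max_eq_right h1']

lemma sel_cont (S0 S1 δ μ0 μ1 g0 g1 : ℝ) (hS1 : 0 < S1) (ψ : ℝ × ℝ × ℝ)
    (hψ : ψ ∈ PsiSet μ0 μ1 δ) :
    ContinuousAt (selG S0 S1 δ μ0 μ1 g0 g1) ψ := by
  obtain ⟨hden, hBm⟩ := sel_facts S1 δ μ0 μ1 hS1 ψ hψ
  have hBm0 : 0 < selBm S1 δ μ0 μ1 ψ := lt_of_lt_of_le hden hBm
  have hz : ψ.2.2 ≠ 0 := hψ.2.1.ne'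
  have hc_d1 : ContinuousAt (fun p : ℝ × ℝ × ℝ => d1 S1 μ1 p.2.1 p.2.2) ψ := by
    unfold d1
    exact ContinuousAt.div (by fun_prop) (by fun_prop) hz
  have hc_d0 : ContinuousAt (fun p : ℝ × ℝ × ℝ => d0 S0 μ0 p.1 p.2.2) ψ := by
    unfold d0
    exact ContinuousAt.div (by fun_prop) (by fun_prop) hz
  have hc_q : ContinuousAt (fun p : ℝ × ℝ × ℝ => δ / p.2.2) ψ :=
    ContinuousAt.div continuousAt_const (by fun_prop) hz
  have hc_a : ContinuousAt (fun p : ℝ × ℝ × ℝ => (p.1 - μ0) ^ 2) ψ := by fun_prop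
  have hc_b : ContinuousAt (fun p : ℝ × ℝ × ℝ => (p.2.1 - μ1) ^ 2) ψ := by fun_prop
  have hc_Bm : ContinuousAt (selBm S1 δ μ0 μ1) ψ := by
    unfold selBm
    exact (((hc_q.sub hc_a).sub hc_b).add continuousAt_const).add hc_d1
  have hc_A : ContinuousAt (selA S0 μ0) ψ := by
    unfold selA
    exact continuousAt_const.add hc_d0
  have hc_den : ContinuousAt (fun p : ℝ × ℝ × ℝ =>
      1 / (S1 + d1 S1 μ1 p.2.1 p.2.2)) ψ :=
    ContinuousAt.div continuousAt_const (continuousAt_const.add hc_d1) hden.ne'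
  have hc_iBm : ContinuousAt (fun p : ℝ × ℝ × ℝ => 1 / selBm S1 δ μ0 μ1 p) ψ :=
    ContinuousAt.div continuousAt_const hc_Bm hBm0.ne'
  have hc_mn : ContinuousAt (fun p : ℝ × ℝ × ℝ =>
      min g1 (1 / (S1 + d1 S1 μ1 p.2.1 p.2.2))) ψ := continuousAt_const.min hc_den
  have hc_T : ContinuousAt (selT S1 δ μ0 μ1 g1) ψ := by
    unfold selT
    exact hc_iBm.max hc_mn
  have hc_AT : ContinuousAt
      (fun p => selA S0 μ0 p * selT S1 δ μ0 μ1 g1 p) ψ := hc_A.mul hc_T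
  have hc_BT : ContinuousAt
      (fun p => selBm S1 δ μ0 μ1 p * selT S1 δ μ0 μ1 g1 p) ψ := hc_Bm.mul hc_T
  have hc_in : ContinuousAt (fun p : ℝ × ℝ × ℝ =>
      min g0 (selA S0 μ0 p * selT S1 δ μ0 μ1 g1 p
        + selBm S1 δ μ0 μ1 p * selT S1 δ μ0 μ1 g1 p - 1)) ψ :=
    continuousAt_const.min ((hc_AT.add hc_BT).sub continuousAt_const)
  have hc_fst : ContinuousAt (fun p : ℝ × ℝ × ℝ =>
      max (selA S0 μ0 p * selT S1 δ μ0 μ1 g1 p)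
        (min g0 (selA S0 μ0 p * selT S1 δ μ0 μ1 g1 p
          + selBm S1 δ μ0 μ1 p * selT S1 δ μ0 μ1 g1 p - 1))) ψ := hc_AT.max hc_in
  unfold selG
  exact hc_fst.prodMk hc_T

/-- The correspondence `C` of the paper is lower-semicontinuous on `Ψ`: for every
`ψ ∈ Ψ` and every open `V` with `V ∩ C(ψ) ≠ ∅`, there is a neighborhood `U` of `ψ`
such that `V ∩ C(ψ') ≠ ∅` for all `ψ' ∈ U ∩ Ψ`. -/
theorem stmt_9 (S0 S1 δ μ0 μ1 : ℝ) (hS0 : 0 < S0) (hS1 : 0 < S1) (hδ : 0 < δ) :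
    ∀ ψ ∈ PsiSet μ0 μ1 δ, ∀ V : Set (ℝ × ℝ), IsOpen V →
      (V ∩ corr S0 S1 δ μ0 μ1 ψ).Nonempty →
      ∃ U : Set (ℝ × ℝ × ℝ), IsOpen U ∧ ψ ∈ U ∧
        ∀ ψ' ∈ U ∩ PsiSet μ0 μ1 δ, (V ∩ corr S0 S1 δ μ0 μ1 ψ').Nonempty := by
  intro ψ hψ V hV ⟨s, hsV, hsC⟩
  have hGψ : selG S0 S1 δ μ0 μ1 s.1 s.2 ψ = s := sel_fix S0 S1 δ μ0 μ1 hS1 s ψ hψ hsC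
  have hcont := sel_cont S0 S1 δ μ0 μ1 s.1 s.2 hS1 ψ hψ
  have hmem : selG S0 S1 δ μ0 μ1 s.1 s.2 ⁻¹' V ∈ nhds ψ :=
    hcont.preimage_mem_nhds (by rw [hGψ]; exact hV.mem_nhds hsV)
  obtain ⟨U, hUsub, hUopen, hψU⟩ := mem_nhds_iff.mp hmem
  refine ⟨U, hUopen, hψU, ?_⟩
  rintro p ⟨hpU, hpΨ⟩
  exact ⟨selG S0 S1 δ μ0 μ1 s.1 s.2 p, hUsub hpU,
    sel_mem S0 S1 δ μ0 μ1 hS1 s.1 s.2 p hpΨ⟩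
end

section
/- With f(s, ψ) = (1/2)[Γ̃0 - log Γ̃0 - 1 + ((1-α)μ1 + αν1 - (1-α)μ0 - αν0)²/α · Γ̃1] for s = (Γ̃0, Γ̃1) ∈ S = {s : Γ̃0 > 0, Γ̃1 > 0} and ψ = (ν0, ν1, α) ∈ Ψ, and with the correspondence C of the paper, the value function f*(ψ) = min{f(s,ψ) : s ∈ C(ψ)} is continuous on Ψ. -/
open Set

/-- The objective `f(s, ψ)` of Problem 4, with `s = (Γ̃0, Γ̃1)` and `ψ = (ν0, ν1, α)`. -/
noncomputable def objF (μ0 μ1 : ℝ) (s : ℝ × ℝ) (ψ : ℝ × ℝ × ℝ) : ℝ :=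
  (1 / 2) * (s.1 - Real.log s.1 - 1
    + ((1 - ψ.2.2) * μ1 + ψ.2.2 * ψ.2.1 - (1 - ψ.2.2) * μ0 - ψ.2.2 * ψ.1) ^ 2 / ψ.2.2 * s.2)

namespace Stmt10Aux

/-- clamp to `[0,1]`. -/
noncomputable def cl01 (t : ℝ) : ℝ := max 0 (min t 1)

lemma cl01_mem (t : ℝ) : cl01 t ∈ Icc (0:ℝ) 1 :=
  ⟨le_max_left _ _, max_le (by norm_num) (min_le_right _ _)⟩

lemma cl01_eq {t : ℝ} (ht : t ∈ Icc (0:ℝ) 1) : cl01 t = t := by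
  unfold cl01
  rw [min_eq_left ht.2, max_eq_right ht.1]

lemma continuous_cl01 : Continuous cl01 :=
  continuous_const.max (continuous_id.min continuous_const)

/-- clamp `α` into `[α₀/2, (1+α₀)/2]`. -/
noncomputable def clA (α₀ : ℝ) (ψ : ℝ × ℝ × ℝ) : ℝ :=
  max (α₀ / 2) (min ψ.2.2 ((1 + α₀) / 2))

noncomputable def aA (S0 μ0 α₀ : ℝ) (ψ : ℝ × ℝ × ℝ) : ℝ :=
  S0 + d0 S0 μ0 ψ.1 (clA α₀ ψ)

noncomputable def aE (S1 μ1 α₀ : ℝ) (ψ : ℝ × ℝ × ℝ) : ℝ :=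
  S1 + d1 S1 μ1 ψ.2.1 (clA α₀ ψ)

noncomputable def aC (S1 δ μ0 μ1 α₀ : ℝ) (ψ : ℝ × ℝ × ℝ) : ℝ :=
  max (aE S1 μ1 α₀ ψ + (δ / clA α₀ ψ - ((ψ.1 - μ0) ^ 2 + (ψ.2.1 - μ1) ^ 2)))
    (aE S1 μ1 α₀ ψ)

noncomputable def aY (S1 δ μ0 μ1 α₀ : ℝ) (ψ : ℝ × ℝ × ℝ) (t : ℝ) : ℝ :=
  (1 - cl01 t) * (1 / aC S1 δ μ0 μ1 α₀ ψ) + cl01 t * (1 / aE S1 μ1 α₀ ψ)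

noncomputable def aX (S0 S1 δ μ0 μ1 α₀ : ℝ) (ψ : ℝ × ℝ × ℝ) (t u : ℝ) : ℝ :=
  (1 - cl01 u) * (aA S0 μ0 α₀ ψ * aY S1 δ μ0 μ1 α₀ ψ t)
    + cl01 u * ((aA S0 μ0 α₀ ψ + aC S1 δ μ0 μ1 α₀ ψ) * aY S1 δ μ0 μ1 α₀ ψ t - 1)

noncomputable def auxF (S0 S1 δ μ0 μ1 α₀ : ℝ) (ψ : ℝ × ℝ × ℝ) (tu : ℝ × ℝ) : ℝ :=
  (1 / 2) * (aX S0 S1 δ μ0 μ1 α₀ ψ tu.1 tu.2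
    - Real.log (aX S0 S1 δ μ0 μ1 α₀ ψ tu.1 tu.2) - 1
    + ((1 - clA α₀ ψ) * μ1 + clA α₀ ψ * ψ.2.1 - (1 - clA α₀ ψ) * μ0 - clA α₀ ψ * ψ.1) ^ 2
        / clA α₀ ψ * aY S1 δ μ0 μ1 α₀ ψ tu.1)

variable {S0 S1 δ μ0 μ1 α₀ : ℝ} {ψ : ℝ × ℝ × ℝ}

lemma clA_pos (h0 : 0 < α₀) : 0 < clA α₀ ψ :=
  lt_of_lt_of_le (by linarith) (le_max_left _ _)

lemma clA_lt_one (h0 : 0 < α₀) (h1 : α₀ < 1) : clA α₀ ψ < 1 :=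
  max_lt (by linarith) (lt_of_le_of_lt (min_le_right _ _) (by linarith))

lemma d0_nonneg {ν β : ℝ} (hS0 : 0 ≤ S0) (hb : 0 < β) (hb1 : β ≤ 1) :
    0 ≤ d0 S0 μ0 ν β :=
  div_nonneg (by nlinarith [sq_nonneg (μ0 - ν), mul_nonneg (mul_nonneg hb.le (by linarith : (0:ℝ) ≤ 1 - β)) (sq_nonneg (μ0 - ν))]) hb.le

lemma d1_nonneg {ν β : ℝ} (hS1 : 0 ≤ S1) (hb : 0 < β) (hb1 : β ≤ 1) :
    0 ≤ d1 S1 μ1 ν β :=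
  div_nonneg (by nlinarith [sq_nonneg (μ1 - ν), mul_nonneg (mul_nonneg hb.le (by linarith : (0:ℝ) ≤ 1 - β)) (sq_nonneg (μ1 - ν))]) hb.le

lemma aA_ge (hS0 : 0 ≤ S0) (h0 : 0 < α₀) (h1 : α₀ < 1) : S0 ≤ aA S0 μ0 α₀ ψ := by
  have := d0_nonneg (S0 := S0) (μ0 := μ0) (ν := ψ.1) (β := clA α₀ ψ) hS0
    (clA_pos h0) (clA_lt_one h0 h1).le
  unfold aA; linarith

lemma aE_ge (hS1 : 0 ≤ S1) (h0 : 0 < α₀) (h1 : α₀ < 1) : S1 ≤ aE S1 μ1 α₀ ψ := by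
  have := d1_nonneg (S1 := S1) (μ1 := μ1) (ν := ψ.2.1) (β := clA α₀ ψ) hS1
    (clA_pos h0) (clA_lt_one h0 h1).le
  unfold aE; linarith

lemma aE_le_aC : aE S1 μ1 α₀ ψ ≤ aC S1 δ μ0 μ1 α₀ ψ := le_max_right _ _

lemma aE_pos (hS1 : 0 < S1) (h0 : 0 < α₀) (h1 : α₀ < 1) : 0 < aE S1 μ1 α₀ ψ :=
  lt_of_lt_of_le hS1 (aE_ge hS1.le h0 h1)

lemma aC_pos (hS1 : 0 < S1) (h0 : 0 < α₀) (h1 : α₀ < 1) : 0 < aC S1 δ μ0 μ1 α₀ ψ :=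
  lt_of_lt_of_le (aE_pos hS1 h0 h1) aE_le_aC

lemma aY_lb (hS1 : 0 < S1) (h0 : 0 < α₀) (h1 : α₀ < 1) (t : ℝ) :
    1 / aC S1 δ μ0 μ1 α₀ ψ ≤ aY S1 δ μ0 μ1 α₀ ψ t := by
  have hE := aE_pos (S1 := S1) (μ1 := μ1) (ψ := ψ) hS1 h0 h1
  have hEC := aE_le_aC (S1 := S1) (δ := δ) (μ0 := μ0) (μ1 := μ1) (α₀ := α₀) (ψ := ψ)
  have hinv : 1 / aC S1 δ μ0 μ1 α₀ ψ ≤ 1 / aE S1 μ1 α₀ ψ :=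
    one_div_le_one_div_of_le hE hEC
  have ht := cl01_mem t
  unfold aY
  nlinarith [ht.1, ht.2]

lemma aY_ub (hS1 : 0 < S1) (h0 : 0 < α₀) (h1 : α₀ < 1) (t : ℝ) :
    aY S1 δ μ0 μ1 α₀ ψ t ≤ 1 / aE S1 μ1 α₀ ψ := by
  have hE := aE_pos (S1 := S1) (μ1 := μ1) (ψ := ψ) hS1 h0 h1
  have hEC := aE_le_aC (S1 := S1) (δ := δ) (μ0 := μ0) (μ1 := μ1) (α₀ := α₀) (ψ := ψ)
  have hinv : 1 / aC S1 δ μ0 μ1 α₀ ψ ≤ 1 / aE S1 μ1 α₀ ψ :=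
    one_div_le_one_div_of_le hE hEC
  have ht := cl01_mem t
  unfold aY
  nlinarith [ht.1, ht.2]

lemma aY_pos (hS1 : 0 < S1) (h0 : 0 < α₀) (h1 : α₀ < 1) (t : ℝ) :
    0 < aY S1 δ μ0 μ1 α₀ ψ t :=
  lt_of_lt_of_le (one_div_pos.mpr (aC_pos hS1 h0 h1)) (aY_lb hS1 h0 h1 t)

lemma aC_mul_aY (hS1 : 0 < S1) (h0 : 0 < α₀) (h1 : α₀ < 1) (t : ℝ) :
    1 ≤ aC S1 δ μ0 μ1 α₀ ψ * aY S1 δ μ0 μ1 α₀ ψ t := by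
  have hC := aC_pos (S1 := S1) (δ := δ) (μ0 := μ0) (μ1 := μ1) (ψ := ψ) hS1 h0 h1
  have := aY_lb (S1 := S1) (δ := δ) (μ0 := μ0) (μ1 := μ1) (ψ := ψ) hS1 h0 h1 t
  have h2 := mul_le_mul_of_nonneg_left this hC.le
  rwa [mul_one_div, div_self hC.ne'] at h2

lemma aX_lb (hS1 : 0 < S1) (h0 : 0 < α₀) (h1 : α₀ < 1) (t u : ℝ) :
    aA S0 μ0 α₀ ψ * aY S1 δ μ0 μ1 α₀ ψ t ≤ aX S0 S1 δ μ0 μ1 α₀ ψ t u := by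
  have h2 := aC_mul_aY (S1 := S1) (δ := δ) (μ0 := μ0) (μ1 := μ1) (ψ := ψ) hS1 h0 h1 t
  have hu := cl01_mem u
  unfold aX
  nlinarith [hu.1, hu.2]

lemma aX_ub (hS1 : 0 < S1) (h0 : 0 < α₀) (h1 : α₀ < 1) (t u : ℝ) :
    aX S0 S1 δ μ0 μ1 α₀ ψ t u
      ≤ (aA S0 μ0 α₀ ψ + aC S1 δ μ0 μ1 α₀ ψ) * aY S1 δ μ0 μ1 α₀ ψ t - 1 := by
  have h2 := aC_mul_aY (S1 := S1) (δ := δ) (μ0 := μ0) (μ1 := μ1) (ψ := ψ) hS1 h0 h1 t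
  have hu := cl01_mem u
  unfold aX
  nlinarith [hu.1, hu.2]

lemma aX_pos (hS0 : 0 < S0) (hS1 : 0 < S1) (h0 : 0 < α₀) (h1 : α₀ < 1) (t u : ℝ) :
    0 < aX S0 S1 δ μ0 μ1 α₀ ψ t u := by
  have hA := lt_of_lt_of_le hS0 (aA_ge (μ0 := μ0) (ψ := ψ) hS0.le h0 h1)
  have hY := aY_pos (S1 := S1) (δ := δ) (μ0 := μ0) (μ1 := μ1) (ψ := ψ) hS1 h0 h1 t
  exact lt_of_lt_of_le (mul_pos hA hY) (aX_lb hS1 h0 h1 t u)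

/-- any point of an interval is a convex combination of the endpoints. -/
lemma exists_convex {p q z : ℝ} (hpz : p ≤ z) (hzq : z ≤ q) :
    ∃ t ∈ Icc (0:ℝ) 1, (1 - t) * p + t * q = z := by
  rcases eq_or_lt_of_le (hpz.trans hzq) with h | h
  · exact ⟨0, ⟨le_refl 0, zero_le_one⟩, by rw [← h] at hzq; nlinarith⟩
  · refine ⟨(z - p) / (q - p),
      ⟨div_nonneg (by linarith) (by linarith),
        (div_le_one (by linarith)).mpr (by linarith)⟩, ?_⟩
    have h2 : (z - p) / (q - p) * (q - p) = z - p := div_mul_cancel₀ _ (by linarith)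
    linear_combination h2

section Continuity

lemma auxF_continuous (hS0 : 0 < S0) (hS1 : 0 < S1) (h0 : 0 < α₀) (h1 : α₀ < 1) :
    Continuous fun p : (ℝ × ℝ × ℝ) × ℝ × ℝ => auxF S0 S1 δ μ0 μ1 α₀ p.1 p.2 := by
  have c1 : Continuous fun p : (ℝ × ℝ × ℝ) × ℝ × ℝ => p.1.1 := by fun_prop
  have c2 : Continuous fun p : (ℝ × ℝ × ℝ) × ℝ × ℝ => p.1.2.1 := by fun_prop
  have c3 : Continuous fun p : (ℝ × ℝ × ℝ) × ℝ × ℝ => p.1.2.2 := by fun_prop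
  have cβ : Continuous fun p : (ℝ × ℝ × ℝ) × ℝ × ℝ => clA α₀ p.1 := by
    unfold clA; fun_prop
  have hβ : ∀ p : (ℝ × ℝ × ℝ) × ℝ × ℝ, clA α₀ p.1 ≠ 0 := fun p => (clA_pos h0).ne'
  have cd0 : Continuous fun p : (ℝ × ℝ × ℝ) × ℝ × ℝ => d0 S0 μ0 p.1.1 (clA α₀ p.1) := by
    unfold d0
    exact Continuous.div (by fun_prop) cβ hβ
  have cd1 : Continuous fun p : (ℝ × ℝ × ℝ) × ℝ × ℝ => d1 S1 μ1 p.1.2.1 (clA α₀ p.1) := by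
    unfold d1
    exact Continuous.div (by fun_prop) cβ hβ
  have cA : Continuous fun p : (ℝ × ℝ × ℝ) × ℝ × ℝ => aA S0 μ0 α₀ p.1 := by
    unfold aA; exact continuous_const.add cd0
  have cE : Continuous fun p : (ℝ × ℝ × ℝ) × ℝ × ℝ => aE S1 μ1 α₀ p.1 := by
    unfold aE; exact continuous_const.add cd1
  have cC : Continuous fun p : (ℝ × ℝ × ℝ) × ℝ × ℝ => aC S1 δ μ0 μ1 α₀ p.1 := by
    unfold aC
    exact (cE.add ((Continuous.div continuous_const cβ hβ).sub (by fun_prop))).max cE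
  have hE : ∀ p : (ℝ × ℝ × ℝ) × ℝ × ℝ, aE S1 μ1 α₀ p.1 ≠ 0 :=
    fun p => (aE_pos hS1 h0 h1).ne'
  have hC : ∀ p : (ℝ × ℝ × ℝ) × ℝ × ℝ, aC S1 δ μ0 μ1 α₀ p.1 ≠ 0 :=
    fun p => (aC_pos hS1 h0 h1).ne'
  have cY : Continuous fun p : (ℝ × ℝ × ℝ) × ℝ × ℝ => aY S1 δ μ0 μ1 α₀ p.1 p.2.1 := by
    unfold aY
    exact ((continuous_const.sub (continuous_cl01.comp (by fun_prop))).mul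
        (Continuous.div continuous_const cC hC)).add
      ((continuous_cl01.comp (by fun_prop : Continuous fun p : (ℝ × ℝ × ℝ) × ℝ × ℝ => p.2.1)).mul
        (Continuous.div continuous_const cE hE))
  have cX : Continuous fun p : (ℝ × ℝ × ℝ) × ℝ × ℝ => aX S0 S1 δ μ0 μ1 α₀ p.1 p.2.1 p.2.2 := by
    unfold aX
    exact ((continuous_const.sub (continuous_cl01.comp (by fun_prop))).mul (cA.mul cY)).add
      ((continuous_cl01.comp (by fun_prop : Continuous fun p : (ℝ × ℝ × ℝ) × ℝ × ℝ => p.2.2)).mul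
        (((cA.add cC).mul cY).sub continuous_const))
  have hX : ∀ p : (ℝ × ℝ × ℝ) × ℝ × ℝ, aX S0 S1 δ μ0 μ1 α₀ p.1 p.2.1 p.2.2 ≠ 0 :=
    fun p => (aX_pos hS0 hS1 h0 h1 _ _).ne'
  have cM : Continuous fun p : (ℝ × ℝ × ℝ) × ℝ × ℝ =>
      ((1 - clA α₀ p.1) * μ1 + clA α₀ p.1 * p.1.2.1
        - (1 - clA α₀ p.1) * μ0 - clA α₀ p.1 * p.1.1) ^ 2 := by fun_prop
  unfold auxF
  exact continuous_const.mul
    (((cX.sub (cX.log hX)).sub continuous_const).add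
      ((Continuous.div cM cβ hβ).mul cY))

end Continuity

end Stmt10Aux

open Stmt10Aux in
/-- Theorem 2 of the paper (value-function part): the value function
`f*(ψ) = min{f(s,ψ) : s ∈ C(ψ)}` is continuous on `Ψ`. -/
theorem stmt_10 (S0 S1 δ μ0 μ1 : ℝ) (hS0 : 0 < S0) (hS1 : 0 < S1) (hδ : 0 < δ) :
    ContinuousOn
      (fun ψ => sInf ((fun s => objF μ0 μ1 s ψ) '' corr S0 S1 δ μ0 μ1 ψ))
      (PsiSet μ0 μ1 δ) := by
  intro ψ₀ hψ₀
  obtain ⟨hδψ₀, hα0, hα1⟩ := hψ₀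
  set α₀ := ψ₀.2.2 with hα₀def
  -- the compact parameter square
  have hK : IsCompact (Icc (0:ℝ) 1 ×ˢ Icc (0:ℝ) 1) := isCompact_Icc.prod isCompact_Icc
  have hGcont : Continuous fun ψ =>
      sInf (auxF S0 S1 δ μ0 μ1 α₀ ψ '' (Icc (0:ℝ) 1 ×ˢ Icc (0:ℝ) 1)) :=
    hK.continuous_sInf (auxF_continuous hS0 hS1 hα0 hα1)
  -- the good open neighbourhood of ψ₀
  set V : Set (ℝ × ℝ × ℝ) := {ψ | ψ.2.2 ∈ Ioo (α₀ / 2) ((1 + α₀) / 2)} with hVdef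
  have hVopen : IsOpen V :=
    isOpen_Ioo.preimage (show Continuous fun ψ : ℝ × ℝ × ℝ => ψ.2.2 by fun_prop)
  have hψ₀V : ψ₀ ∈ V := ⟨by linarith, by linarith⟩
  -- on `Ψ ∩ V` the two images agree
  have hEq : ∀ ψ ∈ PsiSet μ0 μ1 δ ∩ V,
      ((fun s => objF μ0 μ1 s ψ) '' corr S0 S1 δ μ0 μ1 ψ)
        = auxF S0 S1 δ μ0 μ1 α₀ ψ '' (Icc (0:ℝ) 1 ×ˢ Icc (0:ℝ) 1) := by
    rintro ψ ⟨⟨hδψ, hα, hα'⟩, hV1, hV2⟩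
    have hclA : clA α₀ ψ = ψ.2.2 := by
      unfold clA
      rw [min_eq_left (le_of_lt hV2), max_eq_right (le_of_lt hV1)]
    have hr2 : (ψ.1 - μ0) ^ 2 + (ψ.2.1 - μ1) ^ 2 ≤ δ / ψ.2.2 := by
      rw [le_div_iff₀ hα]; nlinarith
    have hce : aC S1 δ μ0 μ1 α₀ ψ
        = aE S1 μ1 α₀ ψ + (δ / ψ.2.2 - ((ψ.1 - μ0) ^ 2 + (ψ.2.1 - μ1) ^ 2)) := by
      unfold aC
      rw [hclA]
      exact max_eq_left (by linarith)
    have hAeq : aA S0 μ0 α₀ ψ = S0 + d0 S0 μ0 ψ.1 ψ.2.2 := by unfold aA; rw [hclA]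
    have hEeq : aE S1 μ1 α₀ ψ = S1 + d1 S1 μ1 ψ.2.1 ψ.2.2 := by unfold aE; rw [hclA]
    have hbEq : δ / ψ.2.2 - (ψ.1 - μ0) ^ 2 - (ψ.2.1 - μ1) ^ 2 + S0 + S1
          + d0 S0 μ0 ψ.1 ψ.2.2 + d1 S1 μ1 ψ.2.1 ψ.2.2
        = aA S0 μ0 α₀ ψ + aC S1 δ μ0 μ1 α₀ ψ := by
      rw [hce, hAeq, hEeq]; ring
    have hA0 : 0 < aA S0 μ0 α₀ ψ := lt_of_lt_of_le hS0 (aA_ge hS0.le hα0 hα1)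
    have hE0 : 0 < aE S1 μ1 α₀ ψ := aE_pos hS1 hα0 hα1
    have hC0 : 0 < aC S1 δ μ0 μ1 α₀ ψ := aC_pos hS1 hα0 hα1
    ext z
    constructor
    · rintro ⟨⟨X, Y⟩, ⟨hc1, hc2, hc3⟩, rfl⟩
      simp only at hc1 hc2 hc3
      rw [← hAeq] at hc1
      rw [hbEq] at hc2
      rw [← hEeq] at hc3
      have hCY : 1 ≤ aC S1 δ μ0 μ1 α₀ ψ * Y := by nlinarith
      have hYlb : 1 / aC S1 δ μ0 μ1 α₀ ψ ≤ Y := by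
        rw [div_le_iff₀ hC0]; linarith [mul_comm Y (aC S1 δ μ0 μ1 α₀ ψ)]
      obtain ⟨t, ht, hty⟩ := exists_convex hYlb hc3
      obtain ⟨u, hu, hux⟩ := exists_convex hc1 hc2
      refine ⟨(t, u), ⟨ht, hu⟩, ?_⟩
      have hYt : aY S1 δ μ0 μ1 α₀ ψ t = Y := by
        unfold aY; rw [cl01_eq ht]; exact hty
      have hXt : aX S0 S1 δ μ0 μ1 α₀ ψ t u = X := by
        unfold aX; rw [cl01_eq hu, hYt]; exact hux
      simp only [auxF, objF, hXt, hYt, hclA]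
    · rintro ⟨⟨t, u⟩, ⟨ht, hu⟩, rfl⟩
      refine ⟨(aX S0 S1 δ μ0 μ1 α₀ ψ t u, aY S1 δ μ0 μ1 α₀ ψ t), ⟨?_, ?_, ?_⟩, ?_⟩
      · simpa only [← hAeq] using aX_lb (S0 := S0) hS1 hα0 hα1 t u
      · simpa only [hbEq] using aX_ub (S0 := S0) hS1 hα0 hα1 t u
      · simpa only [← hEeq] using aY_ub (δ := δ) (μ0 := μ0) hS1 hα0 hα1 t
      · simp only [auxF, objF, hclA]
  -- conclude by congruence on a neighbourhood within Ψ
  have hVmem : V ∈ nhdsWithin ψ₀ (PsiSet μ0 μ1 δ) :=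
    mem_nhdsWithin_of_mem_nhds (hVopen.mem_nhds hψ₀V)
  refine ContinuousWithinAt.congr_of_eventuallyEq
    (hGcont.continuousAt.continuousWithinAt) ?_ ?_
  · filter_upwards [hVmem, self_mem_nhdsWithin] with ψ hV hΨ
    exact congrArg sInf (hEq ψ ⟨hΨ, hV⟩)
  · exact congrArg sInf (hEq ψ₀ ⟨⟨hδψ₀, hα0, hα1⟩, hψ₀V⟩)
end
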